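/- Let k ≥ 2, R_k the rotation of ℝ² by 2π/k, and (G,γ) a ℤ/kℤ-colored graph that decomposes into two spanning map-graphs X and Y, each of whose components has nontrivial ρ-image, with k = 2. If every edge of X is assigned direction v and every edge of Y is assigned direction w, with v, w linearly independent, then any solution p: V(G) → ℝ² of the system ⟨R₂^{γ_{ij}} p_j − p_i, d_{ij}^⊥⟩ = 0 for all edges ij (where d_{ij} is the assigned direction) satisfies p_i = 0 for all vertices i. -/

import Mathlib

section Preamble
variable {V E : Type}

/-- Rotation of the plane by angle θ, as a 2×2 matrix. -/
noncomputable def rotM (θ : ℝ) : Matrix (Fin 2) (Fin 2) ℝ :=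
  !![Real.cos θ, -Real.sin θ; Real.sin θ, Real.cos θ]

/-- Counterclockwise rotation by π/2. -/
def perp (x : Fin 2 → ℝ) : Fin 2 → ℝ := ![-(x 1), x 0]

def dot (a b : Fin 2 → ℝ) : ℝ := a 0 * b 0 + a 1 * b 1

def unitv (x : Fin 2 → ℝ) : Prop := x 0 ^ 2 + x 1 ^ 2 = 1

/-- Vertices spanned by an edge set. -/
def verts [DecidableEq V] (src tgt : E → V) (S : Finset E) : Finset V :=
  S.image src ∪ S.image tgt

/-- Walks in a directed multigraph using edges of `S`, each edge traversed
forwards (`true`) or backwards (`false`). -/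
def IsWalk (src tgt : E → V) (S : Finset E) : V → V → List (E × Bool) → Prop
  | a, b, [] => a = b
  | a, b, (e, o) :: rest =>
      e ∈ S ∧ (if o = true then src e = a ∧ IsWalk src tgt S (tgt e) b rest
               else tgt e = a ∧ IsWalk src tgt S (src e) b rest)

/-- Signed sum of colors along a walk. -/
def wsum {k : ℕ} (col : E → ZMod k) (l : List (E × Bool)) : ZMod k :=
  (l.map fun s => if s.2 = true then col s.1 else - col s.1).sum

def Conn (src tgt : E → V) (S : Finset E) (a b : V) : Prop :=
  ∃ l, IsWalk src tgt S a b l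

def compOf [DecidableEq V] (src tgt : E → V) (S : Finset E) (v : V) : Set V :=
  {u | u ∈ verts src tgt S ∧ Conn src tgt S v u}

/-- Connected components of the subgraph spanned by S. -/
def comps [DecidableEq V] (src tgt : E → V) (S : Finset E) : Set (Set V) :=
  {C | ∃ v ∈ verts src tgt S, C = compOf src tgt S v}

/-- A component has trivial ρ-image: all closed walks in it have color sum 0. -/
def TrivComp {k : ℕ} (src tgt : E → V) (col : E → ZMod k) (S : Finset E) (C : Set V) : Prop :=
  ∀ v ∈ C, ∀ l, IsWalk src tgt S v v l → wsum col l = 0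

/-- number of connected components with trivial ρ-image -/
noncomputable def c0 [DecidableEq V] {k : ℕ} (src tgt : E → V) (col : E → ZMod k)
    (S : Finset E) : ℕ :=
  {C ∈ comps src tgt S | TrivComp src tgt col S C}.ncard

/-- number of connected components with nontrivial ρ-image -/
noncomputable def cN [DecidableEq V] {k : ℕ} (src tgt : E → V) (col : E → ZMod k)
    (S : Finset E) : ℕ :=
  {C ∈ comps src tgt S | ¬ TrivComp src tgt col S C}.ncard

/-- every subgraph satisfies m' ≤ 2n' − c' − 3c'₀ -/
def ConeLamanSparse [DecidableEq V] {k : ℕ} (src tgt : E → V) (col : E → ZMod k) : Prop :=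
  ∀ S : Finset E,
    S.card + cN src tgt col S + 3 * c0 src tgt col S ≤ 2 * (verts src tgt S).card

def ConeLaman [DecidableEq V] [Fintype V] [Fintype E] {k : ℕ}
    (src tgt : E → V) (col : E → ZMod k) : Prop :=
  Fintype.card E + 1 = 2 * Fintype.card V ∧ ConeLamanSparse src tgt col

def Cone22 [DecidableEq V] [Fintype V] [Fintype E] {k : ℕ}
    (src tgt : E → V) (col : E → ZMod k) : Prop :=
  Fintype.card E = 2 * Fintype.card V ∧
  ∀ S : Finset E, S.card + 2 * c0 src tgt col S ≤ 2 * (verts src tgt S).card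

def Refl22 [DecidableEq V] [Fintype V] [Fintype E] {k : ℕ}
    (src tgt : E → V) (col : E → ZMod k) : Prop :=
  Fintype.card E + 1 = 2 * Fintype.card V ∧
  ∀ S : Finset E,
    S.card + cN src tgt col S + 2 * c0 src tgt col S ≤ 2 * (verts src tgt S).card

def ReflLaman [DecidableEq V] [Fintype V] [Fintype E]
    (src tgt : E → V) (col : E → ZMod 2) : Prop :=
  Fintype.card E + 1 = 2 * Fintype.card V ∧ ConeLamanSparse src tgt col

/-- every subgraph of S satisfies m' ≤ 2n' − 2c' − 3c'₀ -/
def RossSparse [DecidableEq V] {k : ℕ} (src tgt : E → V) (col : E → ZMod k)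
    (S : Finset E) : Prop :=
  ∀ S' ⊆ S,
    S'.card + 2 * cN src tgt col S' + 3 * c0 src tgt col S' ≤ 2 * (verts src tgt S').card

/-- The subgraph S is a Ross graph: m = 2n − 2 and Ross-sparse. -/
def IsRossSub [DecidableEq V] {k : ℕ} (src tgt : E → V) (col : E → ZMod k)
    (S : Finset E) : Prop :=
  S.card + 2 = 2 * (verts src tgt S).card ∧ RossSparse src tgt col S

/-- Becomes a Ross graph after deleting any single edge. -/
def RossCircuit [DecidableEq V] [DecidableEq E] {k : ℕ} (src tgt : E → V)
    (col : E → ZMod k) (S : Finset E) : Prop :=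
  S.Nonempty ∧ ∀ e ∈ S, IsRossSub src tgt col (S.erase e)

/-- A (2,2)-block / (2,2)-graph: m = 2n−2, and (2,2)-sparse. -/
def Tight22 [DecidableEq V] (src tgt : E → V) (S : Finset E) : Prop :=
  S.card + 2 = 2 * (verts src tgt S).card ∧
  ∀ S' ⊆ S, S'.Nonempty → S'.card + 2 ≤ 2 * (verts src tgt S').card

def SpanningTree [DecidableEq V] [Fintype V] (src tgt : E → V) (T : Finset E) : Prop :=
  (∀ a b : V, Conn src tgt T a b) ∧ T.card + 1 = Fintype.card V

def Spanning [DecidableEq V] [Fintype V] (src tgt : E → V) (S : Finset E) : Prop :=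
  verts src tgt S = Finset.univ

/-- A map-graph (exactly one cycle per component, i.e. every component has as many
edges as vertices) all of whose components have nontrivial ρ-image. -/
def Map11 [DecidableEq V] {k : ℕ} (src tgt : E → V) (col : E → ZMod k) (S : Finset E) : Prop :=
  (∀ C ∈ comps src tgt S, ((S : Set E) ∩ {e | src e ∈ C}).ncard = C.ncard) ∧
  (∀ C ∈ comps src tgt S, ¬ TrivComp src tgt col S C)

end Preamble

/-- Action of R₂^g for g ∈ ℤ/2ℤ, where R₂ is rotation by π. -/
def rpow2 (g : ZMod 2) (x : Fin 2 → ℝ) : Fin 2 → ℝ := if g = 0 then x else -x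

noncomputable def sgn2 (g : ZMod 2) : ℝ := if g = 0 then 1 else -1

lemma sgn2_add (a b : ZMod 2) : sgn2 (a + b) = sgn2 a * sgn2 b := by
  fin_cases a <;> fin_cases b <;>
    simp [sgn2, show (1 + 1 : ZMod 2) = 0 from rfl] <;> norm_num <;> split_ifs <;> simp_all <;> contradiction

lemma sgn2_sq (a : ZMod 2) : sgn2 a * sgn2 a = 1 := by
  fin_cases a <;> simp [sgn2] <;> split_ifs <;> simp_all

lemma sgn2_neg (a : ZMod 2) : sgn2 (-a) = sgn2 a := by
  simp only [sgn2, neg_eq_zero]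

lemma sgn2_of_ne (a : ZMod 2) (h : a ≠ 0) : sgn2 a = -1 := by
  fin_cases a <;> simp_all [sgn2]

lemma dot_rpow2 (g : ZMod 2) (x y z : Fin 2 → ℝ) :
    dot (rpow2 g x - y) z = sgn2 g * dot x z - dot y z := by
  fin_cases g <;> simp [rpow2, sgn2, dot] <;> split_ifs <;> simp_all <;> ring

lemma walk_rel {V E : Type} (src tgt : E → V) (col : E → ZMod 2) (S : Finset E)
    (q : V → ℝ) (h : ∀ e ∈ S, q (src e) = sgn2 (col e) * q (tgt e)) :
    ∀ l (a b : V), IsWalk src tgt S a b l → q a = sgn2 (wsum col l) * q b := by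
  intro l
  induction l with
  | nil =>
    intro a b hw
    have hab : a = b := hw
    subst hab; simp [wsum, sgn2]
  | cons s rest ih =>
    obtain ⟨e, o⟩ := s
    intro a b hw
    obtain ⟨heS, hrest⟩ := hw
    cases o with
    | true =>
      simp only [if_pos rfl] at hrest
      obtain ⟨hsrc, hwrest⟩ := hrest
      have hws : wsum col ((e, true) :: rest) = col e + wsum col rest := by
        simp [wsum]
      have hih := ih (tgt e) b hwrest
      rw [hws, sgn2_add, ← hsrc, h e heS, hih]
      ring
    | false =>
      simp only [Bool.false_eq_true, if_neg (by simp : ¬(false = true))] at hrest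
      obtain ⟨htgt, hwrest⟩ := hrest
      have hws : wsum col ((e, false) :: rest) = -col e + wsum col rest := by
        simp [wsum]
      have hqt : q (tgt e) = sgn2 (col e) * q (src e) := by
        rw [h e heS, ← mul_assoc, sgn2_sq, one_mul]
      have hih := ih (src e) b hwrest
      rw [hws, sgn2_add, sgn2_neg, ← htgt, hqt, hih]
      ring

/-- If S is spanning and every component has nontrivial ρ-image, a quantity
transported with signs along edges must vanish everywhere. -/
lemma vanish {V E : Type} [Fintype V] [DecidableEq V] (src tgt : E → V)
    (col : E → ZMod 2) (S : Finset E) (hsp : Spanning src tgt S)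
    (hnt : ∀ C ∈ comps src tgt S, ¬ TrivComp src tgt col S C)
    (q : V → ℝ) (h : ∀ e ∈ S, q (src e) = sgn2 (col e) * q (tgt e)) (i : V) :
    q i = 0 := by
  have hi : i ∈ verts src tgt S := by rw [hsp]; exact Finset.mem_univ i
  have hC : compOf src tgt S i ∈ comps src tgt S := ⟨i, hi, rfl⟩
  have := hnt _ hC
  rw [TrivComp] at this
  push_neg at this
  obtain ⟨u, huC, l, hwl, hwsum⟩ := this
  have hqu : q u = sgn2 (wsum col l) * q u := walk_rel src tgt col S q h l u u hwl
  rw [sgn2_of_ne _ hwsum] at hqu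
  have hqu0 : q u = 0 := by linarith
  obtain ⟨_, l', hwl'⟩ := huC
  have := walk_rel src tgt col S q h l' i u hwl'
  rw [this, hqu0, mul_zero]

/-- For k = 2: if a cone-(2,2) graph is decomposed into two spanning map-graphs
X and Y with every component of nontrivial ρ-image, every edge of X gets
direction v and every edge of Y direction w, with v, w linearly independent,
then every solution of the colored direction-network system is identically 0. -/
theorem stmt17 {V E : Type} [Fintype V] [Fintype E] [DecidableEq V] [DecidableEq E]
    (src tgt : E → V) (col : E → ZMod 2)
    (X Y : Finset E) (hdisj : Disjoint X Y) (hunion : X ∪ Y = Finset.univ)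
    (hXsp : Spanning src tgt X) (hX : Map11 src tgt col X)
    (hYsp : Spanning src tgt Y) (hY : Map11 src tgt col Y)
    (v w : Fin 2 → ℝ) (hind : LinearIndependent ℝ ![v, w])
    (d : E → Fin 2 → ℝ) (hdX : ∀ e ∈ X, d e = v) (hdY : ∀ e ∈ Y, d e = w)
    (p : V → Fin 2 → ℝ)
    (hsol : ∀ e : E, dot (rpow2 (col e) (p (tgt e)) - p (src e)) (perp (d e)) = 0) :
    ∀ i : V, p i = 0 := by
  -- determinant nonzero
  have hdet : v 0 * w 1 - v 1 * w 0 ≠ 0 := by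
    intro h0
    have hpair := LinearIndependent.pair_iff.mp hind
    have h1 := hpair (w 0) (-(v 0)) (by
      funext j; fin_cases j <;> simp <;> nlinarith [h0])
    have h2 := hpair (w 1) (-(v 1)) (by
      funext j; fin_cases j <;> simp <;> nlinarith [h0])
    have hv : v = 0 := by
      funext j; fin_cases j
      · simpa using neg_eq_zero.mp h1.2
      · simpa using neg_eq_zero.mp h2.2
    have := hpair 1 0 (by simp [hv])
    exact one_ne_zero this.1
  -- the two scalar quantities
  have hqv : ∀ i : V, dot (p i) (perp v) = 0 := by
    apply vanish src tgt col X hXsp hX.2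
    intro e he
    have := hsol e
    rw [hdX e he, dot_rpow2] at this
    linarith
  have hqw : ∀ i : V, dot (p i) (perp w) = 0 := by
    apply vanish src tgt col Y hYsp hY.2
    intro e he
    have := hsol e
    rw [hdY e he, dot_rpow2] at this
    linarith
  intro i
  have h1 : p i 0 * (-(v 1)) + p i 1 * v 0 = 0 := by
    have := hqv i; simpa [dot, perp] using this
  have h2 : p i 0 * (-(w 1)) + p i 1 * w 0 = 0 := by
    have := hqw i; simpa [dot, perp] using this
  have hx0 : p i 0 = 0 := by
    have hd : (v 0 * w 1 - v 1 * w 0) * p i 0 = 0 := by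
      linear_combination w 0 * h1 - v 0 * h2
    exact (mul_eq_zero.mp hd).resolve_left hdet
  have hx1 : p i 1 = 0 := by
    have hd : (v 0 * w 1 - v 1 * w 0) * p i 1 = 0 := by
      linear_combination w 1 * h1 - v 1 * h2
    exact (mul_eq_zero.mp hd).resolve_left hdet
  funext j
  fin_cases j
  · exact hx0
  · exact hx1
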